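/- arXiv:1610.04714 — 3 statements merged into one kernel-verified Lean document; each statement's English description precedes it below -/
import Mathlib

section
/- (RBK step as gossip) Let n ≥ 1, let H be a simple graph on vertex set {1,…,n}, and let V = {y ∈ ℝⁿ : y_i = y_j for every edge (i,j) of H}, a linear subspace of ℝⁿ. Then for every x ∈ ℝⁿ and every vertex i, the i-th coordinate of the orthogonal projection of x onto V equals the average of the coordinates x_j over all vertices j in the connected component of i in H; that is, (proj_V x)_i = (1/|C_i|)∑_{j ∈ C_i} x_j, where C_i is the connected component of i in H. -/
open scoped Classical

/-- The subspace of `ℝⁿ` (with the Euclidean inner product) of vectors that agree across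
every edge of the simple graph `H`. -/
def consensusSubspace (n : ℕ) (H : SimpleGraph (Fin n)) :
    Submodule ℝ (EuclideanSpace ℝ (Fin n)) where
  carrier := {y | ∀ i j : Fin n, H.Adj i j → y i = y j}
  add_mem' := by
    intro a b ha hb i j hij
    simp only [PiLp.add_apply, ha i j hij, hb i j hij]
  zero_mem' := by intro i j _; rfl
  smul_mem' := by
    intro t a ha i j hij
    simp only [PiLp.smul_apply, ha i j hij]

/-- RBK step as gossip: the `i`-th coordinate of the orthogonal projection of
`x` onto the subspace `V = {y : y i = y j for every edge (i,j) of H}` is the average of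
the coordinates `x j` over the connected component of `i` in `H`. -/
theorem orthogonalProjection_consensus_apply (n : ℕ) (hn : 1 ≤ n) (H : SimpleGraph (Fin n))
    (x : EuclideanSpace ℝ (Fin n)) (i : Fin n) :
    (Submodule.orthogonalProjection (consensusSubspace n H) x : EuclideanSpace ℝ (Fin n)) i
      = (∑ j ∈ Finset.univ.filter (fun j => H.Reachable i j), x j)
          / (Finset.univ.filter (fun j => H.Reachable i j)).card := by
  classical
  set C : Fin n → Finset (Fin n) :=
    fun k => Finset.univ.filter (fun j => H.Reachable k j) with hC
  have hmemC : ∀ k, k ∈ C k := fun k => by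
    simp only [hC, Finset.mem_filter, Finset.mem_univ, true_and]
    exact SimpleGraph.Reachable.refl k
  have hcard : ∀ k, ((C k).card : ℝ) ≠ 0 := by
    intro k
    have : 0 < (C k).card := Finset.card_pos.mpr ⟨k, hmemC k⟩
    exact_mod_cast this.ne'
  have hCeq : ∀ {a b : Fin n}, H.Reachable a b → C a = C b := by
    intro a b hab
    ext k
    simp only [hC, Finset.mem_filter, Finset.mem_univ, true_and]
    exact ⟨fun h => hab.symm.trans h, fun h => hab.trans h⟩
  have hconst : ∀ z, z ∈ consensusSubspace n H → ∀ a b : Fin n, H.Reachable a b → z a = z b := by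
    intro z hz a b hab
    obtain ⟨w⟩ := hab
    induction w with
    | nil => rfl
    | cons h p ih => exact (hz _ _ h).trans ih
  set y : EuclideanSpace ℝ (Fin n) :=
    WithLp.toLp 2 fun k => (∑ j ∈ C k, x j) / (C k).card with hy
  have hyV : y ∈ consensusSubspace n H := by
    intro a b hab
    simp only [hy, PiLp.toLp_apply]
    rw [hCeq hab.reachable]
  have key : ((Submodule.orthogonalProjection (consensusSubspace n H) x : EuclideanSpace ℝ (Fin n))) = y := by
    refine Submodule.eq_starProjection_of_mem_of_inner_eq_zero hyV ?_
    intro z hz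
    rw [inner_sub_left, sub_eq_zero]
    simp only [PiLp.inner_apply, RCLike.inner_apply, conj_trivial]
    have h1 : ∀ k, y k * z k = ∑ j ∈ C k, x j * z j / (C j).card := by
      intro k
      rw [hy, PiLp.toLp_apply]
      rw [div_mul_eq_mul_div, Finset.sum_mul, Finset.sum_div]
      refine Finset.sum_congr rfl fun j hj => ?_
      have hr : H.Reachable k j := by
        simpa only [hC, Finset.mem_filter, Finset.mem_univ, true_and] using hj
      rw [hconst z hz k j hr, hCeq hr]
    have main : ∑ k, y k * z k = ∑ k, x k * z k := by
      calc ∑ k, y k * z k = ∑ k, ∑ j ∈ C k, x j * z j / (C j).card :=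
            Finset.sum_congr rfl fun k _ => h1 k
        _ = ∑ k : Fin n, ∑ j : Fin n, if H.Reachable k j then x j * z j / (C j).card else 0 := by
            refine Finset.sum_congr rfl fun k _ => ?_
            rw [hC, Finset.sum_filter]
        _ = ∑ j : Fin n, ∑ k : Fin n, if H.Reachable k j then x j * z j / (C j).card else 0 :=
            Finset.sum_comm
        _ = ∑ j : Fin n, x j * z j := by
            refine Finset.sum_congr rfl fun j _ => ?_
            rw [← Finset.sum_filter]
            have hfe : Finset.univ.filter (fun k => H.Reachable k j) = C j := by
              ext k
              simp only [hC, Finset.mem_filter, Finset.mem_univ, true_and]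
              exact ⟨fun h => h.symm, fun h => h.symm⟩
            rw [hfe, Finset.sum_const, nsmul_eq_mul, mul_comm,
              div_mul_cancel₀ _ (hcard j)]
    simpa only [mul_comm] using main.symm
  rw [key]
end

section
/- (Complexity of SDA, primal form) Let E be a finite-dimensional real inner product space, Ω a finite set, (V_ω)_{ω∈Ω} subspaces with orthogonal projections P_ω, p_ω ≥ 0 weights summing to 1, H = ∑_ω p_ω P_ω, K = ker H, and λ = inf{⟨v,Hv⟩ : v ∈ K^⊥, ‖v‖=1}. Then for every v ∈ K^⊥ and every k ≥ 0: ∑_{s : {1,…,k} → Ω} (∏_{i=1}^k p_{s(i)}) · ‖(I − P_{s(k)})···(I − P_{s(1)}) v‖² ≤ (1 − λ)^k ‖v‖². -/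
/-- The expected projection operator `H = ∑ ω, p ω • P ω`, where `P ω` is the orthogonal
projection onto the subspace `V ω`. -/
noncomputable def expectedProj {E : Type*} [NormedAddCommGroup E] [InnerProductSpace ℝ E]
    [FiniteDimensional ℝ E] {Ω : Type*} [Fintype Ω] (V : Ω → Submodule ℝ E) (p : Ω → ℝ) :
    E →ₗ[ℝ] E :=
  ∑ ω, p ω • ((V ω).subtype ∘ₗ (Submodule.orthogonalProjectionOnto (V ω)).toLinearMap)

section aux

variable {E : Type*} [NormedAddCommGroup E] [InnerProductSpace ℝ E]
    [FiniteDimensional ℝ E] {Ω : Type*} [Fintype Ω] (V : Ω → Submodule ℝ E) (p : Ω → ℝ)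

lemma inner_expectedProj (v : E) :
    (inner ℝ v (expectedProj V p v) : ℝ)
      = ∑ ω, p ω * ‖(Submodule.orthogonalProjectionOnto (V ω) v : E)‖ ^ 2 := by
  simp only [expectedProj, LinearMap.sum_apply, LinearMap.smul_apply, LinearMap.comp_apply,
    Submodule.coe_subtype, inner_sum, real_inner_smul_right, ContinuousLinearMap.coe_coe]
  refine Finset.sum_congr rfl fun ω _ => ?_
  congr 1
  set P := (Submodule.orthogonalProjectionOnto (V ω) v : E) with hP
  have h0 : (inner ℝ P (v - P) : ℝ) = 0 :=
    (Submodule.sub_starProjection_mem_orthogonal (K := V ω) v) _ (Submodule.orthogonalProjectionOnto (V ω) v).2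
  have h0' : (inner ℝ (v - P) P : ℝ) = 0 := by rw [real_inner_comm]; exact h0
  calc (inner ℝ v P : ℝ) = inner ℝ (P + (v - P)) P := by rw [add_sub_cancel]
    _ = (inner ℝ P P : ℝ) + inner ℝ (v - P) P := inner_add_left _ _ _
    _ = ‖P‖ ^ 2 := by rw [h0', real_inner_self_eq_norm_sq, add_zero]

lemma pyth_step (W : Submodule ℝ E) (v : E) :
    ‖v - (Submodule.orthogonalProjectionOnto W v : E)‖ ^ 2 = ‖v‖ ^ 2 - ‖(Submodule.orthogonalProjectionOnto W v : E)‖ ^ 2 := by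
  have horth : (inner ℝ (Submodule.orthogonalProjectionOnto W v : E) (v - (Submodule.orthogonalProjectionOnto W v : E)) : ℝ) = 0 :=
    (Submodule.sub_starProjection_mem_orthogonal (K := W) v) _ (Submodule.orthogonalProjectionOnto W v).2
  have h : ‖(Submodule.orthogonalProjectionOnto W v : E) + (v - (Submodule.orthogonalProjectionOnto W v : E))‖ ^ 2
      = ‖(Submodule.orthogonalProjectionOnto W v : E)‖ ^ 2 + ‖v - (Submodule.orthogonalProjectionOnto W v : E)‖ ^ 2 := by
    rw [norm_add_sq_real, horth]; ring
  rw [add_sub_cancel] at h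
  linarith

lemma step_sum (v : E) :
    ∑ ω, p ω * ‖v - (Submodule.orthogonalProjectionOnto (V ω) v : E)‖ ^ 2
      = (∑ ω, p ω) * ‖v‖ ^ 2 - (inner ℝ v (expectedProj V p v) : ℝ) := by
  rw [inner_expectedProj, Finset.sum_mul, ← Finset.sum_sub_distrib]
  refine Finset.sum_congr rfl fun ω _ => ?_
  rw [pyth_step]; ring

lemma mem_V_orthogonal_of_ker (hp : ∀ ω, 0 ≤ p ω) {u : E}
    (hu : u ∈ LinearMap.ker (expectedProj V p)) {ω : Ω} (hpω : 0 < p ω) :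
    (Submodule.orthogonalProjectionOnto (V ω) u : E) = 0 := by
  have h0 : (inner ℝ u (expectedProj V p u) : ℝ) = 0 := by
    rw [LinearMap.mem_ker.mp hu, inner_zero_right]
  rw [inner_expectedProj] at h0
  have hterm : ∀ ω' ∈ Finset.univ, (0:ℝ) ≤ p ω' * ‖(Submodule.orthogonalProjectionOnto (V ω') u : E)‖ ^ 2 :=
    fun ω' _ => mul_nonneg (hp ω') (by positivity)
  have := (Finset.sum_eq_zero_iff_of_nonneg hterm).mp h0 ω (Finset.mem_univ ω)
  have hn : ‖(Submodule.orthogonalProjectionOnto (V ω) u : E)‖ ^ 2 = 0 := by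
    rcases mul_eq_zero.mp this with h | h
    · exact absurd h (ne_of_gt hpω)
    · exact h
  simpa using pow_eq_zero_iff (n := 2) (by norm_num) |>.mp hn

lemma V_le_Korth (hp : ∀ ω, 0 ≤ p ω) {ω : Ω} (hpω : 0 < p ω) :
    V ω ≤ (LinearMap.ker (expectedProj V p))ᗮ := by
  intro x hx u hu
  have hproj := mem_V_orthogonal_of_ker V p hp hu hpω
  have : u - (Submodule.orthogonalProjectionOnto (V ω) u : E) ∈ (V ω)ᗮ :=
    Submodule.sub_starProjection_mem_orthogonal (K := V ω) u
  rw [hproj, sub_zero] at this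
  rw [real_inner_comm]
  exact this x hx

lemma S_bddBelow : BddBelow {r : ℝ | ∃ w ∈ (LinearMap.ker (expectedProj V p))ᗮ,
      ‖w‖ = 1 ∧ r = (inner ℝ w (expectedProj V p w) : ℝ)} → True := fun _ => trivial

lemma lam_mul_le (hp : ∀ ω, 0 ≤ p ω) (w : E)
    (hw : w ∈ (LinearMap.ker (expectedProj V p))ᗮ) :
    sInf {r : ℝ | ∃ w ∈ (LinearMap.ker (expectedProj V p))ᗮ,
        ‖w‖ = 1 ∧ r = (inner ℝ w (expectedProj V p w) : ℝ)} * ‖w‖ ^ 2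
      ≤ (inner ℝ w (expectedProj V p w) : ℝ) := by
  set S := {r : ℝ | ∃ w ∈ (LinearMap.ker (expectedProj V p))ᗮ,
        ‖w‖ = 1 ∧ r = (inner ℝ w (expectedProj V p w) : ℝ)}
  have hbdd : BddBelow S := by
    refine ⟨0, fun r hr => ?_⟩
    obtain ⟨u, _, _, rfl⟩ := hr
    rw [inner_expectedProj]
    exact Finset.sum_nonneg fun ω _ => mul_nonneg (hp ω) (by positivity)
  by_cases hw0 : w = 0
  · simp [hw0]
  · have hn : ‖w‖ ≠ 0 := norm_ne_zero_iff.mpr hw0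
    have hmem : (inner ℝ ((‖w‖)⁻¹ • w) (expectedProj V p ((‖w‖)⁻¹ • w)) : ℝ) ∈ S := by
      refine ⟨(‖w‖)⁻¹ • w, Submodule.smul_mem _ _ hw, ?_, rfl⟩
      rw [norm_smul]; simp [abs_of_nonneg (inv_nonneg.mpr (norm_nonneg w)), inv_mul_cancel₀ hn]
    have hle := csInf_le hbdd hmem
    have hval : (inner ℝ ((‖w‖)⁻¹ • w) (expectedProj V p ((‖w‖)⁻¹ • w)) : ℝ)
        = (‖w‖ ^ 2)⁻¹ * (inner ℝ w (expectedProj V p w) : ℝ) := by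
      rw [map_smul, real_inner_smul_left, real_inner_smul_right]
      rw [← mul_assoc, ← mul_inv, ← sq]
    rw [hval] at hle
    have h2 : (0:ℝ) < ‖w‖ ^ 2 := by positivity
    calc sInf S * ‖w‖ ^ 2 ≤ ((‖w‖ ^ 2)⁻¹ * (inner ℝ w (expectedProj V p w) : ℝ)) * ‖w‖ ^ 2 := by
          exact mul_le_mul_of_nonneg_right hle (le_of_lt h2)
      _ = (inner ℝ w (expectedProj V p w) : ℝ) := by field_simp

lemma one_sub_lam_nonneg (hp : ∀ ω, 0 ≤ p ω) (hsum : ∑ ω, p ω = 1) :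
    0 ≤ 1 - sInf {r : ℝ | ∃ w ∈ (LinearMap.ker (expectedProj V p))ᗮ,
        ‖w‖ = 1 ∧ r = (inner ℝ w (expectedProj V p w) : ℝ)} := by
  set S := {r : ℝ | ∃ w ∈ (LinearMap.ker (expectedProj V p))ᗮ,
        ‖w‖ = 1 ∧ r = (inner ℝ w (expectedProj V p w) : ℝ)}
  rcases Set.eq_empty_or_nonempty S with hS | hS
  · rw [hS, Real.sInf_empty]; norm_num
  · obtain ⟨r, hr⟩ := hS
    have hbdd : BddBelow S := by
      refine ⟨0, fun r hr => ?_⟩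
      obtain ⟨u, _, _, rfl⟩ := hr
      rw [inner_expectedProj]
      exact Finset.sum_nonneg fun ω _ => mul_nonneg (hp ω) (by positivity)
    have hle1 : r ≤ 1 := by
      obtain ⟨u, _, hu1, rfl⟩ := hr
      rw [inner_expectedProj]
      calc ∑ ω, p ω * ‖(Submodule.orthogonalProjectionOnto (V ω) u : E)‖ ^ 2
          ≤ ∑ ω, p ω * ‖u‖ ^ 2 := by
            refine Finset.sum_le_sum fun ω _ => ?_
            refine mul_le_mul_of_nonneg_left ?_ (hp ω)
            have hpy := pyth_step (V ω) u
            have hnn' : (0:ℝ) ≤ ‖u - (Submodule.orthogonalProjectionOnto (V ω) u : E)‖ ^ 2 := by positivity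
            linarith
        _ = 1 := by rw [← Finset.sum_mul, hsum, hu1]; norm_num
    linarith [csInf_le hbdd hr]

end aux

/-- Complexity of SDA, primal form: for `v ∈ K^⊥` (`K = ker H`) and any
`k`, the expected squared norm of `(I − P_{s k}) ⋯ (I − P_{s 1}) v` over i.i.d. samples
`s : {1,…,k} → Ω` drawn from `p` is at most `(1 − λ)^k ‖v‖²`, where
`λ = inf {⟨w, H w⟩ : w ∈ K^⊥, ‖w‖ = 1}`. -/
theorem sda_complexity {E : Type*} [NormedAddCommGroup E] [InnerProductSpace ℝ E]
    [FiniteDimensional ℝ E] {Ω : Type*} [Fintype Ω] (V : Ω → Submodule ℝ E) (p : Ω → ℝ)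
    (hp : ∀ ω, 0 ≤ p ω) (hsum : ∑ ω, p ω = 1) (v : E)
    (hv : v ∈ (LinearMap.ker (expectedProj V p))ᗮ) (k : ℕ) :
    ∑ s : Fin k → Ω, (∏ i, p (s i)) *
        ‖(List.ofFn s).foldl (fun w ω => w - (Submodule.orthogonalProjectionOnto (V ω) w : E)) v‖ ^ 2
      ≤ (1 - sInf {r : ℝ | ∃ w ∈ (LinearMap.ker (expectedProj V p))ᗮ,
            ‖w‖ = 1 ∧ r = (inner ℝ w (expectedProj V p w) : ℝ)}) ^ k * ‖v‖ ^ 2 := by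
  set lam := sInf {r : ℝ | ∃ w ∈ (LinearMap.ker (expectedProj V p))ᗮ,
            ‖w‖ = 1 ∧ r = (inner ℝ w (expectedProj V p w) : ℝ)} with hlam
  have hnn : 0 ≤ 1 - lam := one_sub_lam_nonneg V p hp hsum
  induction k generalizing v with
  | zero => simp
  | succ k ih =>
    -- reindex the sum
    have hre : ∑ s : Fin (k+1) → Ω, (∏ i, p (s i)) *
          ‖(List.ofFn s).foldl (fun w ω => w - (Submodule.orthogonalProjectionOnto (V ω) w : E)) v‖ ^ 2
        = ∑ ω : Ω, p ω * ∑ t : Fin k → Ω, (∏ i, p (t i)) *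
          ‖(List.ofFn t).foldl (fun w ω => w - (Submodule.orthogonalProjectionOnto (V ω) w : E))
            (v - (Submodule.orthogonalProjectionOnto (V ω) v : E))‖ ^ 2 := by
      rw [← (Fin.consEquiv fun _ : Fin (k+1) => Ω).sum_comp]
      rw [Fintype.sum_prod_type]
      refine Finset.sum_congr rfl fun ω _ => ?_
      rw [Finset.mul_sum]
      refine Finset.sum_congr rfl fun t _ => ?_
      have h1 : (Fin.consEquiv fun _ : Fin (k+1) => Ω) (ω, t) = Fin.cons ω t := by
        ext i
        refine Fin.cases ?_ (fun j => ?_) i <;> simp [Fin.consEquiv, Fin.cons]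
      rw [h1]
      rw [Fin.prod_univ_succ]
      simp only [Fin.cons_zero, Fin.cons_succ]
      rw [List.ofFn_succ]
      simp only [Fin.cons_zero, Fin.cons_succ, List.foldl_cons]
      ring
    rw [hre]
    have hstep : ∀ ω : Ω, p ω * (∑ t : Fin k → Ω, (∏ i, p (t i)) *
          ‖(List.ofFn t).foldl (fun w ω => w - (Submodule.orthogonalProjectionOnto (V ω) w : E))
            (v - (Submodule.orthogonalProjectionOnto (V ω) v : E))‖ ^ 2)
        ≤ p ω * ((1 - lam) ^ k * ‖v - (Submodule.orthogonalProjectionOnto (V ω) v : E)‖ ^ 2) := by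
      intro ω
      rcases (hp ω).lt_or_eq with hpω | hpω
      · refine mul_le_mul_of_nonneg_left ?_ (hp ω)
        refine ih (v - (Submodule.orthogonalProjectionOnto (V ω) v : E)) ?_
        exact Submodule.sub_mem _ hv (V_le_Korth V p hp hpω (Submodule.orthogonalProjectionOnto (V ω) v).2)
      · rw [← hpω]; simp
    calc ∑ ω : Ω, p ω * ∑ t : Fin k → Ω, (∏ i, p (t i)) *
          ‖(List.ofFn t).foldl (fun w ω => w - (Submodule.orthogonalProjectionOnto (V ω) w : E))
            (v - (Submodule.orthogonalProjectionOnto (V ω) v : E))‖ ^ 2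
        ≤ ∑ ω : Ω, p ω * ((1 - lam) ^ k * ‖v - (Submodule.orthogonalProjectionOnto (V ω) v : E)‖ ^ 2) :=
          Finset.sum_le_sum fun ω _ => hstep ω
      _ = (1 - lam) ^ k * ∑ ω, p ω * ‖v - (Submodule.orthogonalProjectionOnto (V ω) v : E)‖ ^ 2 := by
          rw [Finset.mul_sum]; refine Finset.sum_congr rfl fun ω _ => ?_; ring
      _ ≤ (1 - lam) ^ k * ((1 - lam) * ‖v‖ ^ 2) := by
          refine mul_le_mul_of_nonneg_left ?_ (pow_nonneg hnn k)
          rw [step_sum V p v, hsum, one_mul]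
          have := lam_mul_le V p hp v hv
          linarith
      _ = (1 - lam) ^ (k + 1) * ‖v‖ ^ 2 := by ring
end

section
/- (Convergence of block gossip to the average) Let n ≥ 1 and let G be a simple graph on {1,…,n} with edge set E. For an edge e = (i,j) let a_e ∈ ℝⁿ be the vector with +1 in coordinate i, −1 in coordinate j, and 0 elsewhere. Let 𝒮 be a finite collection of subsets of E with probabilities p_S ≥ 0 summing to 1, let P_S be the orthogonal projection onto span{a_e : e ∈ S}, and let λ = inf{∑_S p_S ⟨v, P_S v⟩ : ‖v‖ = 1, ⟨v, 1_n⟩ = 0}. Let c ∈ ℝⁿ, c̄ = (1/n)∑_i c_i, and define the random gossip iterates by x⁰ = c and x^{k+1} = (I − P_{S_k}) x^k with S_k drawn i.i.d. from (p_S). Then for every k ≥ 0: ∑_{s : {1,…,k} → 𝒮} (∏_{i=1}^k p_{s(i)}) ‖(I − P_{s(k)})···(I − P_{s(1)})(c − c̄·1_n)‖² ≤ (1 − λ)^k ‖c − c̄·1_n‖², i.e., E‖x^k − c̄·1_n‖² ≤ (1−λ)^k ‖c − c̄·1_n‖². -/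
/-- Reinterpret a vector in `ℝⁿ` as an element of the Euclidean space `ℝⁿ`. -/
def toEuc {n : ℕ} (x : Fin n → ℝ) : EuclideanSpace ℝ (Fin n) := WithLp.toLp 2 x

/-- The vector `a_e ∈ ℝⁿ` attached to an (oriented) edge `e = (i, j)`: `+1` in
coordinate `i`, `−1` in coordinate `j`, and `0` elsewhere. -/
noncomputable def edgeVec {n : ℕ} (e : Fin n × Fin n) : EuclideanSpace ℝ (Fin n) :=
  EuclideanSpace.single e.1 (1 : ℝ) - EuclideanSpace.single e.2 (1 : ℝ)

/-- Orthogonal projection `P_S` onto `span {a_e : e ∈ S}` for a set `S` of edges. -/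
noncomputable def edgeProj {n : ℕ} (S : Set (Fin n × Fin n))
    (v : EuclideanSpace ℝ (Fin n)) : EuclideanSpace ℝ (Fin n) :=
  (Submodule.orthogonalProjectionOnto (Submodule.span ℝ (edgeVec '' S)) v : EuclideanSpace ℝ (Fin n))

lemma inner_edgeProj_self {n : ℕ} (S : Set (Fin n × Fin n)) (w : EuclideanSpace ℝ (Fin n)) :
    (inner ℝ w (edgeProj S w) : ℝ) = ‖edgeProj S w‖ ^ 2 := by
  have h := Submodule.starProjection_inner_eq_zero (K := Submodule.span ℝ (edgeVec '' S)) w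
    (edgeProj S w) (Submodule.orthogonalProjectionOnto _ w).2
  have h2 : (inner ℝ w (edgeProj S w) : ℝ) - inner ℝ (edgeProj S w) (edgeProj S w) = 0 := by
    rw [← inner_sub_left]; exact h
  rw [← real_inner_self_eq_norm_sq]; linarith

lemma edgeProj_smul {n : ℕ} (S : Set (Fin n × Fin n)) (a : ℝ) (w : EuclideanSpace ℝ (Fin n)) :
    edgeProj S (a • w) = a • edgeProj S w := by
  unfold edgeProj; rw [map_smul]; rfl

lemma inner_edgeProj_one {n : ℕ} (S : Set (Fin n × Fin n)) (w : EuclideanSpace ℝ (Fin n)) :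
    (inner ℝ (edgeProj S w) (toEuc (fun _ => (1:ℝ))) : ℝ) = 0 := by
  have hmem : (toEuc (fun _ => (1:ℝ)) : EuclideanSpace ℝ (Fin n)) ∈
      (Submodule.span ℝ (edgeVec '' S))ᗮ := by
    rw [Submodule.mem_orthogonal]
    intro x hx
    induction hx using Submodule.span_induction with
    | mem x hx =>
        obtain ⟨e, _, rfl⟩ := hx
        simp [edgeVec, inner_sub_left, EuclideanSpace.inner_single_left, toEuc]
    | zero => simp
    | add x y _ _ hx hy => rw [inner_add_left, hx, hy, add_zero]
    | smul a x _ hx => rw [inner_smul_left, hx, mul_zero]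
  exact hmem _ (Submodule.orthogonalProjectionOnto _ w).2

lemma norm_sq_sub_edgeProj {n : ℕ} (S : Set (Fin n × Fin n)) (w : EuclideanSpace ℝ (Fin n)) :
    ‖w - edgeProj S w‖ ^ 2 = ‖w‖ ^ 2 - (inner ℝ w (edgeProj S w) : ℝ) := by
  rw [norm_sub_sq_real, inner_edgeProj_self]
  have := inner_edgeProj_self S w
  nlinarith [this]

/-- Convergence of block gossip to the average: for edge subsets
`S ω ⊆ E(G)` sampled with probabilities `p ω`, the expected squared distance of the `k`-th
gossip iterate (started from `x⁰ = c`, with update `x ↦ (I − P_{S ω}) x` applied to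
`x − c̄·1ₙ`) to the consensus vector `c̄·1ₙ` decays geometrically:
`E‖x^k − c̄·1ₙ‖² ≤ (1 − λ)^k ‖c − c̄·1ₙ‖²`, where
`λ = inf {∑ ω, p ω ⟨v, P_{S ω} v⟩ : ‖v‖ = 1, ⟨v, 1ₙ⟩ = 0}`. -/
theorem block_gossip_convergence (n : ℕ) (hn : 1 ≤ n) (G : SimpleGraph (Fin n))
    {Ω : Type*} [Fintype Ω] (S : Ω → Set (Fin n × Fin n))
    (hS : ∀ ω : Ω, ∀ e ∈ S ω, G.Adj e.1 e.2)
    (p : Ω → ℝ) (hp : ∀ ω, 0 ≤ p ω) (hsum : ∑ ω, p ω = 1)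
    (c : EuclideanSpace ℝ (Fin n)) (k : ℕ) :
    ∑ s : Fin k → Ω, (∏ i, p (s i)) *
        ‖(List.ofFn s).foldl (fun w ω => w - edgeProj (S ω) w)
          (c - ((∑ i, c i) / n) • toEuc (fun _ => 1))‖ ^ 2
      ≤ (1 - sInf {r : ℝ | ∃ v : EuclideanSpace ℝ (Fin n), ‖v‖ = 1 ∧
            (inner ℝ v (toEuc (fun _ => 1)) : ℝ) = 0 ∧
            r = ∑ ω, p ω * (inner ℝ v (edgeProj (S ω) v) : ℝ)}) ^ k
          * ‖c - ((∑ i, c i) / n) • toEuc (fun _ => 1)‖ ^ 2 := by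
  classical
  set u : EuclideanSpace ℝ (Fin n) := toEuc (fun _ => 1) with hu
  set Λ : Set ℝ := {r : ℝ | ∃ v : EuclideanSpace ℝ (Fin n), ‖v‖ = 1 ∧
            (inner ℝ v u : ℝ) = 0 ∧
            r = ∑ ω, p ω * (inner ℝ v (edgeProj (S ω) v) : ℝ)} with hΛ
  set L : ℝ := sInf Λ with hLdef
  -- elements of Λ are in [0,1]
  have hΛ01 : ∀ r ∈ Λ, 0 ≤ r ∧ r ≤ 1 := by
    rintro r ⟨v, hv1, _, rfl⟩
    constructor
    · apply Finset.sum_nonneg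
      intro ω _
      rw [inner_edgeProj_self]
      exact mul_nonneg (hp ω) (sq_nonneg _)
    · rw [← hsum]
      apply Finset.sum_le_sum
      intro ω _
      have hP : ‖edgeProj (S ω) v‖ ^ 2 ≤ 1 := by
        have h1 := norm_sq_sub_edgeProj (S ω) v
        have h2 := inner_edgeProj_self (S ω) v
        have h3 : (0:ℝ) ≤ ‖v - edgeProj (S ω) v‖ ^ 2 := sq_nonneg _
        rw [hv1] at h1
        nlinarith
      rw [inner_edgeProj_self]
      nlinarith [hp ω]
  have hbdd : BddBelow Λ := ⟨0, fun r hr => (hΛ01 r hr).1⟩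
  have hL1 : L ≤ 1 := by
    rcases Set.eq_empty_or_nonempty Λ with h | ⟨r, hr⟩
    · rw [hLdef, h, Real.sInf_empty]; norm_num
    · exact le_trans (csInf_le hbdd hr) (hΛ01 r hr).2
  have hpow : ∀ m : ℕ, (0:ℝ) ≤ (1 - L) ^ m := fun m => pow_nonneg (by linarith) m
  -- one-step inequality
  have hstep : ∀ w : EuclideanSpace ℝ (Fin n), (inner ℝ w u : ℝ) = 0 →
      ∑ ω, p ω * ‖w - edgeProj (S ω) w‖ ^ 2 ≤ (1 - L) * ‖w‖ ^ 2 := by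
    intro w hw
    have hexp : ∑ ω, p ω * ‖w - edgeProj (S ω) w‖ ^ 2
        = ‖w‖ ^ 2 - ∑ ω, p ω * (inner ℝ w (edgeProj (S ω) w) : ℝ) := by
      simp_rw [norm_sq_sub_edgeProj, mul_sub]
      rw [Finset.sum_sub_distrib, ← Finset.sum_mul, hsum, one_mul]
    have hkey : L * ‖w‖ ^ 2 ≤ ∑ ω, p ω * (inner ℝ w (edgeProj (S ω) w) : ℝ) := by
      rcases eq_or_ne w 0 with rfl | hw0
      · simp
      · have hnw : (0:ℝ) < ‖w‖ := norm_pos_iff.mpr hw0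
        set v : EuclideanSpace ℝ (Fin n) := ‖w‖⁻¹ • w with hv
        have hv1 : ‖v‖ = 1 := by
          rw [hv, norm_smul, norm_inv, norm_norm, inv_mul_cancel₀ (ne_of_gt hnw)]
        have hvu : (inner ℝ v u : ℝ) = 0 := by
          rw [hv, real_inner_smul_left, hw, mul_zero]
        have hvP : ∀ ω, (inner ℝ v (edgeProj (S ω) v) : ℝ)
            = ‖w‖⁻¹ ^ 2 * (inner ℝ w (edgeProj (S ω) w) : ℝ) := by
          intro ω
          rw [hv, edgeProj_smul, real_inner_smul_left, real_inner_smul_right]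
          ring
        have hmem : (∑ ω, p ω * (inner ℝ v (edgeProj (S ω) v) : ℝ)) ∈ Λ := ⟨v, hv1, hvu, rfl⟩
        have hle := csInf_le hbdd hmem
        rw [← hLdef] at hle
        have hsum2 : ∑ ω, p ω * (inner ℝ v (edgeProj (S ω) v) : ℝ)
            = ‖w‖⁻¹ ^ 2 * ∑ ω, p ω * (inner ℝ w (edgeProj (S ω) w) : ℝ) := by
          rw [Finset.mul_sum]
          exact Finset.sum_congr rfl fun ω _ => by rw [hvP ω]; ring
        rw [hsum2] at hle
        have h2 : ‖w‖⁻¹ ^ 2 = (‖w‖ ^ 2)⁻¹ := by rw [inv_pow]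
        rw [h2] at hle
        have hnw2 : (0:ℝ) < ‖w‖ ^ 2 := by positivity
        calc L * ‖w‖ ^ 2 ≤ ((‖w‖ ^ 2)⁻¹ * ∑ ω, p ω * (inner ℝ w (edgeProj (S ω) w) : ℝ)) * ‖w‖ ^ 2 :=
              mul_le_mul_of_nonneg_right hle (le_of_lt hnw2)
          _ = ∑ ω, p ω * (inner ℝ w (edgeProj (S ω) w) : ℝ) := by
              field_simp
    rw [hexp]; nlinarith
  -- main induction
  have key : ∀ m : ℕ, ∀ w : EuclideanSpace ℝ (Fin n), (inner ℝ w u : ℝ) = 0 →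
      ∑ s : Fin m → Ω, (∏ i, p (s i)) *
        ‖(List.ofFn s).foldl (fun w ω => w - edgeProj (S ω) w) w‖ ^ 2
      ≤ (1 - L) ^ m * ‖w‖ ^ 2 := by
    intro m
    induction m with
    | zero =>
        intro w hw
        simp
    | succ m ih =>
        intro w hw
        rw [← Equiv.sum_comp (Fin.consEquiv fun _ => Ω), Fintype.sum_prod_type]
        have heq : ∀ (ω : Ω) (t : Fin m → Ω),
            (∏ i, p ((Fin.consEquiv fun _ => Ω) (ω, t) i)) *
              ‖(List.ofFn ((Fin.consEquiv fun _ => Ω) (ω, t))).foldl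
                (fun w ω => w - edgeProj (S ω) w) w‖ ^ 2
            = p ω * ((∏ i, p (t i)) *
              ‖(List.ofFn t).foldl (fun w ω => w - edgeProj (S ω) w)
                (w - edgeProj (S ω) w)‖ ^ 2) := by
          intro ω t
          have h1 : ((Fin.consEquiv fun _ => Ω) (ω, t)) = Fin.cons ω t := rfl
          rw [h1, Fin.prod_univ_succ, List.ofFn_succ]
          simp only [Fin.cons_zero, Fin.cons_succ, List.foldl_cons]
          ring
        simp_rw [heq]
        calc ∑ ω, ∑ t : Fin m → Ω, p ω * ((∏ i, p (t i)) *
              ‖(List.ofFn t).foldl (fun w ω => w - edgeProj (S ω) w)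
                (w - edgeProj (S ω) w)‖ ^ 2)
            = ∑ ω, p ω * ∑ t : Fin m → Ω, (∏ i, p (t i)) *
              ‖(List.ofFn t).foldl (fun w ω => w - edgeProj (S ω) w)
                (w - edgeProj (S ω) w)‖ ^ 2 := by
              simp_rw [Finset.mul_sum]
          _ ≤ ∑ ω, p ω * ((1 - L) ^ m * ‖w - edgeProj (S ω) w‖ ^ 2) := by
              apply Finset.sum_le_sum
              intro ω _
              apply mul_le_mul_of_nonneg_left _ (hp ω)
              apply ih
              rw [inner_sub_left, hw, inner_edgeProj_one, sub_zero]
          _ = (1 - L) ^ m * ∑ ω, p ω * ‖w - edgeProj (S ω) w‖ ^ 2 := by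
              rw [Finset.mul_sum]
              exact Finset.sum_congr rfl fun ω _ => by ring
          _ ≤ (1 - L) ^ m * ((1 - L) * ‖w‖ ^ 2) :=
              mul_le_mul_of_nonneg_left (hstep w hw) (hpow m)
          _ = (1 - L) ^ (m + 1) * ‖w‖ ^ 2 := by ring
  apply key
  -- orthogonality of the initial vector
  have h1 : (inner ℝ c u : ℝ) = ∑ i, c i := by
    simp [hu, toEuc, PiLp.inner_apply, RCLike.inner_apply]
  have h2 : (inner ℝ u u : ℝ) = n := by
    rw [hu, toEuc, PiLp.inner_apply]
    simp
  have hn0 : (n:ℝ) ≠ 0 := Nat.cast_ne_zero.mpr (by omega)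
  rw [inner_sub_left, real_inner_smul_left, h1, h2]
  field_simp
  ring
end
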